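/- Let (X₁, X₂) be bivariate standard normal with correlation ρ = −1 (i.e., X₂ = −X₁ with X₁ standard normal), and let α ∈ (0,1). Then for c > 0, sup_{μ₂ ≥ 0} P(X₁·(μ₂+X₂) < 0 and min(|X₁|, |μ₂+X₂|) > c) = P(|X₁| > c) = 2(1−Φ(c)). Hence the critical value solving the size equation at level α is c = Φ⁻¹(1−α/2). -/

import Mathlib

open MeasureTheory ProbabilityTheory

/-- The standard normal distribution on ℝ. -/
noncomputable def stdGauss : Measure ℝ := gaussianReal 0 1

/-- Φ, the standard normal CDF. -/
noncomputable def Φ : ℝ → ℝ := fun x => cdf stdGauss x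

/-- The joint law of two independent standard normals. -/
noncomputable def P2 : Measure (ℝ × ℝ) := stdGauss.prod stdGauss

instance : IsProbabilityMeasure stdGauss := by
  unfold stdGauss; infer_instance

lemma stdGauss_map_neg : stdGauss.map (fun x : ℝ => -x) = stdGauss := by
  have h := gaussianReal_map_const_mul (μ := 0) (v := 1) (-1)
  have h2 : (⟨(-1:ℝ)^2, sq_nonneg _⟩ : NNReal) * 1 = 1 := by ext; norm_num
  rw [mul_zero] at h
  rw [show (fun x : ℝ => -x) = (fun x : ℝ => (-1) * x) from by ext x; ring]
  unfold stdGauss; convert h using 2; ext; simp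

lemma stdGauss_symm (c : ℝ) : stdGauss (Set.Iio (-c)) = stdGauss (Set.Ioi c) := by
  conv_lhs => rw [← stdGauss_map_neg]
  rw [Measure.map_apply measurable_neg measurableSet_Iio]
  congr 1
  ext x
  simp [lt_neg]

lemma stdGauss_Ioi (c : ℝ) : (stdGauss (Set.Ioi c)).toReal = 1 - Φ c := by
  have h : stdGauss (Set.Iic c) + stdGauss (Set.Ioi c) = 1 := by
    rw [← measure_union (Set.Iic_disjoint_Ioi le_rfl) measurableSet_Ioi,
      Set.Iic_union_Ioi, measure_univ]
  have hΦ : Φ c = (stdGauss (Set.Iic c)).toReal := cdf_eq_real (μ := stdGauss) c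
  have h1 : stdGauss (Set.Iic c) ≠ ⊤ := measure_ne_top _ _
  have h2 : stdGauss (Set.Ioi c) ≠ ⊤ := measure_ne_top _ _
  rw [hΦ]
  have := congrArg ENNReal.toReal h
  rw [ENNReal.toReal_add h1 h2] at this
  simp at this
  linarith

/-- Perfect negative correlation (X₂ = −X₁): the worst-case rejection
probability over the null boundary equals P(|X₁| > c) = 2(1−Φ(c)), so the
critical value solving the size equation at level α is c = Φ⁻¹(1−α/2). -/
theorem stmt13 (α c : ℝ) (hα : α ∈ Set.Ioo (0:ℝ) 1) (hc : 0 < c) :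
    (⨆ μ₂ : ℝ, ⨆ _ : μ₂ ≥ 0,
        stdGauss {x : ℝ | x * (μ₂ + -x) < 0 ∧ c < min |x| |μ₂ + -x|})
      = stdGauss {x : ℝ | c < |x|}
    ∧ (stdGauss {x : ℝ | c < |x|}).toReal = 2 * (1 - Φ c)
    ∧ (Φ c = 1 - α / 2 →
        (⨆ μ₂ : ℝ, ⨆ _ : μ₂ ≥ 0,
          stdGauss {x : ℝ | x * (μ₂ + -x) < 0 ∧ c < min |x| |μ₂ + -x|}).toReal = α) := by
  have hsup : (⨆ μ₂ : ℝ, ⨆ _ : μ₂ ≥ 0,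
        stdGauss {x : ℝ | x * (μ₂ + -x) < 0 ∧ c < min |x| |μ₂ + -x|})
      = stdGauss {x : ℝ | c < |x|} := by
    apply le_antisymm
    · apply iSup₂_le
      intro μ₂ _
      apply measure_mono
      intro x hx
      exact lt_of_lt_of_le hx.2 (min_le_left _ _)
    · have h0 : {x : ℝ | c < |x|} = {x : ℝ | x * ((0:ℝ) + -x) < 0 ∧ c < min |x| |(0:ℝ) + -x|} := by
        ext x
        simp only [Set.mem_setOf_eq, zero_add, abs_neg, min_self]
        constructor
        · intro h
          refine ⟨?_, h⟩
          have hx : x ≠ 0 := by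
            intro h'; rw [h'] at h; simp at h; linarith
          nlinarith [mul_self_pos.mpr hx]
        · exact fun h => h.2
      calc stdGauss {x : ℝ | c < |x|}
          = stdGauss {x : ℝ | x * ((0:ℝ) + -x) < 0 ∧ c < min |x| |(0:ℝ) + -x|} := by rw [h0]
        _ ≤ _ := le_iSup₂ (f := fun μ₂ (_ : μ₂ ≥ 0) =>
            stdGauss {x : ℝ | x * (μ₂ + -x) < 0 ∧ c < min |x| |μ₂ + -x|}) 0 le_rfl
  have habs : {x : ℝ | c < |x|} = Set.Iio (-c) ∪ Set.Ioi c := by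
    ext x
    simp only [Set.mem_setOf_eq, Set.mem_union, Set.mem_Iio, Set.mem_Ioi]
    rw [lt_abs]
    constructor
    · rintro (h | h)
      · right; exact h
      · left; linarith
    · rintro (h | h)
      · right; linarith
      · left; exact h
  have hval : (stdGauss {x : ℝ | c < |x|}).toReal = 2 * (1 - Φ c) := by
    rw [habs, measure_union _ measurableSet_Ioi]
    · rw [ENNReal.toReal_add (measure_ne_top _ _) (measure_ne_top _ _),
        stdGauss_symm, stdGauss_Ioi]
      ring
    · apply Set.disjoint_left.mpr
      intro x hx hx'
      simp only [Set.mem_Iio] at hx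
      simp only [Set.mem_Ioi] at hx'
      linarith
  refine ⟨hsup, hval, fun hΦ => ?_⟩
  rw [hsup, hval, hΦ]
  ring
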